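/- (Tao) Let F be a field, D a positive integer, and k ≥ 2. Let δ : [D]^k → F be the diagonal tensor defined by δ(j_1,…,j_k) = 1 if j_1 = j_2 = … = j_k and δ(j_1,…,j_k) = 0 otherwise. Then the slice rank of δ is exactly D. -/

import Mathlib

/-- `SliceRankLE k R T` means that the `k`-fold tensor `T : (Fin k → I) → F` has slice
rank at most `R`: it is a sum of `R` tensors, each of which factors as a function of a
single coordinate times a function of the remaining coordinates. -/
def SliceRankLE {I : Type*} {F : Type*} [Field F] (k R : ℕ)
    (T : (Fin k → I) → F) : Prop :=
  ∃ (l : Fin R → Fin k) (a : Fin R → I → F) (b : Fin R → (Fin k → I) → F),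
    (∀ i : Fin R, ∀ g g' : Fin k → I, (∀ j, j ≠ l i → g j = g' j) → b i g = b i g') ∧
    ∀ g : Fin k → I, T g = ∑ i : Fin R, a i (g (l i)) * b i g

open Finset Module

lemma finrank_ker_constraints {F : Type*} [Field F] {ι : Type*} [Fintype ι] [DecidableEq ι]
    (S : Finset ι) (m : ℕ) (a : Fin m → ι → F) :
    ∃ K : Submodule F (ι → F),
      (∀ h, h ∈ K ↔ ((∀ x ∉ S, h x = 0) ∧ ∀ i, ∑ x, h x * a i x = 0)) ∧
      S.card ≤ finrank F K + m := by
  classical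
  set Φ₁ : (ι → F) →ₗ[F] (Fin m → F) :=
    LinearMap.pi (fun i => ∑ x, a i x • LinearMap.proj x) with hΦ₁
  set Φ₂ : (ι → F) →ₗ[F] (↥(Sᶜ) → F) :=
    LinearMap.funLeft F F (fun x : ↥(Sᶜ) => (x : ι)) with hΦ₂
  refine ⟨LinearMap.ker (Φ₁.prod Φ₂), ?_, ?_⟩
  · intro h
    rw [LinearMap.mem_ker, LinearMap.prod_apply, Function.prod, Prod.mk_eq_zero]
    constructor
    · rintro ⟨h1, h2⟩
      constructor
      · intro x hx
        exact congrFun h2 ⟨x, Finset.mem_compl.2 hx⟩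
      · intro i
        have := congrFun h1 i
        simp only [hΦ₁, LinearMap.pi_apply, LinearMap.sum_apply, LinearMap.smul_apply,
          LinearMap.proj_apply, smul_eq_mul, Pi.zero_apply] at this
        rw [← this]
        exact Finset.sum_congr rfl fun x _ => mul_comm _ _
    · rintro ⟨h1, h2⟩
      constructor
      · funext i
        have := h2 i
        simp only [hΦ₁, LinearMap.pi_apply, LinearMap.sum_apply, LinearMap.smul_apply,
          LinearMap.proj_apply, smul_eq_mul, Pi.zero_apply]
        rw [← this]
        exact Finset.sum_congr rfl fun x _ => mul_comm _ _
      · funext x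
        exact h1 x (Finset.mem_compl.1 x.2)
  · have hrn := LinearMap.finrank_range_add_finrank_ker (Φ₁.prod Φ₂)
    have hr : finrank F (LinearMap.range (Φ₁.prod Φ₂)) ≤ m + (Fintype.card ι - S.card) := by
      have h1 := Submodule.finrank_le (LinearMap.range (Φ₁.prod Φ₂))
      have h2 : finrank F ((Fin m → F) × (↥(Sᶜ) → F)) = m + (Fintype.card ι - S.card) := by
        rw [Module.finrank_prod]
        simp [Finset.card_compl]
      omega
    have hdom : finrank F (ι → F) = Fintype.card ι := by simp
    have hS : S.card ≤ Fintype.card ι := Finset.card_le_univ S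
    omega


open scoped Classical in
lemma exists_large_support {F : Type*} [Field F] {ι : Type*} [Fintype ι] [DecidableEq ι]
    (K : Submodule F (ι → F)) :
    ∃ v ∈ K, finrank F K ≤ (Finset.univ.filter (fun x => v x ≠ 0)).card := by
  classical
  -- property: restriction to T is injective on K
  set P : Finset ι → Prop := fun T => ∀ v ∈ K, (∀ x ∈ T, v x = 0) → v = 0 with hP
  have hPuniv : P Finset.univ := by
    intro v hv h
    funext x; exact h x (Finset.mem_univ x)
  -- choose T with P T of minimal cardinality
  obtain ⟨T, hT, hTmin⟩ : ∃ T, P T ∧ ∀ T', P T' → T.card ≤ T'.card := by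
    have h := Nat.sInf_mem (s := {n | ∃ T : Finset ι, P T ∧ T.card = n}) ⟨_, Finset.univ, hPuniv, rfl⟩
    obtain ⟨T, hT, hcard⟩ := h
    exact ⟨T, hT, fun T' hT' => hcard ▸ Nat.sInf_le ⟨T', hT', rfl⟩⟩
  -- for each x ∈ T, get vx ∈ K vanishing on T.erase x, nonzero
  have hdrop : ∀ x ∈ T, ∃ v ∈ K, (∀ y ∈ T.erase x, v y = 0) ∧ v x ≠ 0 := by
    intro x hx
    by_contra hcon
    push_neg at hcon
    have hPe : P (T.erase x) := by
      intro v hv hz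
      apply hT v hv
      intro y hy
      rcases eq_or_ne y x with rfl | hne
      · exact hcon v hv hz
      · exact hz y (Finset.mem_erase.2 ⟨hne, hy⟩)
    have h1 := hTmin _ hPe
    have h2 := Finset.card_erase_of_mem hx
    have h3 : 0 < T.card := Finset.card_pos.2 ⟨x, hx⟩
    omega
  choose v hvK hvz hvx using hdrop
  -- restriction map K → (T → F) is injective
  set π : K →ₗ[F] (↥T → F) :=
    (LinearMap.funLeft F F (fun x : ↥T => (x : ι))).comp K.subtype with hπ
  have hπinj : Function.Injective π := by
    rw [← LinearMap.ker_eq_bot]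
    ext ⟨w, hw⟩
    simp only [LinearMap.mem_ker, Submodule.mem_bot, Submodule.mk_eq_zero]
    constructor
    · intro h
      apply hT w hw
      intro x hx
      exact congrFun h ⟨x, hx⟩
    · rintro rfl; rfl
  have hle : finrank F K ≤ T.card := by
    have := LinearMap.finrank_le_finrank_of_injective hπinj
    simpa using this
  -- the vx for x ∈ T are linearly independent in K
  have hind : LinearIndependent F (fun x : ↥T => (⟨v x x.2, hvK x x.2⟩ : K)) := by
    rw [Fintype.linearIndependent_iff]
    intro g hg x
    have := congrArg (fun w : K => (w : ι → F) (x : ι)) hg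
    simp only [Submodule.coe_sum, Submodule.coe_smul] at this
    have h2 : ∀ y : ↥T, y ≠ x → g y * v y y.2 (x : ι) = 0 := by
      intro y hy
      have : v y y.2 (x : ι) = 0 := by
        apply hvz y y.2
        exact Finset.mem_erase.2 ⟨fun hxy => hy (Subtype.ext hxy.symm), x.2⟩
      rw [this, mul_zero]
    have h3 : (∑ y : ↥T, g y • v y y.2) (x : ι) = g x * v x x.2 (x : ι) := by
      rw [Finset.sum_apply]
      rw [Finset.sum_eq_single x]
      · simp [Pi.smul_apply, smul_eq_mul]
      · intro y _ hy; simpa [Pi.smul_apply, smul_eq_mul] using h2 y hy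
      · intro h; exact absurd (Finset.mem_univ x) h
    rw [show ((0 : K) : ι → F) (x : ι) = 0 from rfl] at this
    simp only [Finset.sum_apply, Pi.smul_apply, smul_eq_mul] at this h3
    rw [h3] at this
    exact (mul_eq_zero.1 this).resolve_right (hvx x x.2)
  have hge : T.card ≤ finrank F K := by
    simpa using hind.fintype_card_le_finrank
  -- π is bijective, take preimage of all-ones
  have hsurj : Function.Surjective π := by
    have hdim : finrank F K = finrank F (↥T → F) := by
      simp [le_antisymm hle hge]
    exact (LinearMap.injective_iff_surjective_of_finrank_eq_finrank hdim).1 hπinj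
  obtain ⟨⟨w, hwK⟩, hw⟩ := hsurj (fun _ => 1)
  refine ⟨w, hwK, ?_⟩
  have hsub : T ⊆ Finset.univ.filter (fun x => w x ≠ 0) := by
    intro x hx
    have : w x = 1 := congrFun hw ⟨x, hx⟩
    simp [this]
  exact le_trans hle (Finset.card_le_card hsub)


lemma sum_ite_eq_helper {F : Type*} [Field F] {ι : Type*} [Fintype ι] [DecidableEq ι]
    (v : ι → F) (s : ι) (Q : Prop) [Decidable Q] (cs : F) :
    ∑ x, v x * (if x = s ∧ Q then cs else 0) = if Q then v s * cs else 0 := by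
  by_cases hQ : Q
  · simp only [hQ, and_true, mul_ite, mul_zero, if_pos]
    simp [Finset.sum_ite_eq' Finset.univ s (fun x => v x * cs)]
  · simp [hQ]

open scoped Classical in
lemma diag_slice_lower {F : Type*} [Field F] {ι : Type*} [Fintype ι] [DecidableEq ι] :
    ∀ k, 2 ≤ k → ∀ (S : Finset ι) (c : ι → F), (∀ x ∈ S, c x ≠ 0) → ∀ R : ℕ,
    SliceRankLE k R (fun g : Fin k → ι => ∑ x ∈ S, if (∀ j, g j = x) then c x else 0) →
    S.card ≤ R := by
  refine Nat.le_induction ?base ?step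
  case base =>
    rintro S c hc R ⟨l, a, b, hb, hT⟩
    classical
    set A := Finset.univ.filter (fun i : Fin R => l i = 0) with hA
    obtain ⟨K, hKmem, hKrank⟩ :=
      finrank_ker_constraints (F := F) S A.card (fun j => a ((A.equivFin.symm j) : Fin R))
    have hKcon : ∀ h ∈ K, ∀ i ∈ A, ∑ x, h x * a i x = 0 := by
      intro h hh i hi
      have := ((hKmem h).1 hh).2 (A.equivFin ⟨i, hi⟩)
      simpa using this
    have hKsupp : ∀ h ∈ K, ∀ x ∉ S, h x = 0 := fun h hh => ((hKmem h).1 hh).1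
    set g2 : ι → ι → (Fin 2 → ι) := fun x y j => if j = 0 then x else y with hg2
    have key : ∀ h ∈ K, ∀ y : ι,
        c y * h y = ∑ i ∈ Aᶜ, (∑ x, h x * b i (fun _ => x)) * a i y := by
      intro h hh y
      have lhs : (∑ x, h x * ∑ s ∈ S, if (∀ j, g2 x y j = s) then c s else 0) = c y * h y := by
        have e1 : ∀ x, (∑ s ∈ S, if (∀ j, g2 x y j = s) then c s else 0)
            = ∑ s ∈ S, if (x = s ∧ y = s) then c s else 0 := by
          intro x
          refine Finset.sum_congr rfl fun s _ => ?_
          refine if_congr ?_ rfl rfl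
          rw [Fin.forall_fin_two]
          simp [hg2]
        simp_rw [e1, Finset.mul_sum]
        rw [Finset.sum_comm]
        have e2 : ∀ s ∈ S, (∑ x, h x * if (x = s ∧ y = s) then c s else 0)
            = if y = s then h s * c s else 0 := fun s _ => sum_ite_eq_helper h s (y = s) (c s)
        rw [Finset.sum_congr rfl e2, Finset.sum_ite_eq S y (fun s => h s * c s)]
        by_cases hy : y ∈ S
        · rw [if_pos hy, mul_comm]
        · rw [if_neg hy, hKsupp h hh y hy, mul_zero]
      have rhs : (∑ x, h x * ∑ i : Fin R, a i (g2 x y (l i)) * b i (g2 x y))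
          = ∑ i ∈ Aᶜ, (∑ x, h x * b i (fun _ => x)) * a i y := by
        simp_rw [Finset.mul_sum]
        rw [Finset.sum_comm]
        rw [← Finset.sum_filter_add_sum_filter_not Finset.univ (fun i : Fin R => l i = 0)]
        have hA0 : ∀ i ∈ A, (∑ x, h x * (a i (g2 x y (l i)) * b i (g2 x y))) = 0 := by
          intro i hi
          have hli : l i = 0 := by
            simpa [hA] using (Finset.mem_filter.1 hi).2
          have hbconst : ∀ x : ι, b i (g2 x y) = b i (fun _ => y) := by
            intro x
            apply hb
            intro j hj
            rw [hli] at hj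
            simp [hg2, hj]
          have e3 : ∀ x : ι, h x * (a i (g2 x y (l i)) * b i (g2 x y))
              = (h x * a i x) * b i (fun _ => y) := by
            intro x
            rw [hbconst x, hli]
            simp [hg2, mul_assoc]
          rw [Finset.sum_congr rfl (fun x _ => e3 x), ← Finset.sum_mul,
            hKcon h hh i hi, zero_mul]
        rw [Finset.sum_eq_zero hA0, zero_add]
        refine Finset.sum_congr ?_ ?_
        · ext i
          simp [hA]
        · intro i hi
          have hli : l i ≠ 0 := by
            have := Finset.mem_compl.1 hi
            simpa [hA] using this
          have hbconst : ∀ x : ι, b i (g2 x y) = b i (fun _ => x) := by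
            intro x
            apply hb
            intro j hj
            have hj0 : j = 0 := by
              have h1 : j.val ≠ (l i).val := fun hv => hj (Fin.ext hv)
              have h2 : (l i).val ≠ 0 := fun hv => hli (Fin.ext hv)
              have h3 := j.isLt
              have h4 := (l i).isLt
              apply Fin.ext; omega
            simp [hg2, hj0]
          have e4 : ∀ x : ι, h x * (a i (g2 x y (l i)) * b i (g2 x y))
              = (h x * b i (fun _ => x)) * a i y := by
            intro x
            rw [hbconst x]
            have : g2 x y (l i) = y := by simp [hg2, hli]
            rw [this]; ring
          rw [Finset.sum_congr rfl (fun x _ => e4 x), ← Finset.sum_mul]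
      calc c y * h y = ∑ x, h x * ∑ s ∈ S, if (∀ j, g2 x y j = s) then c s else 0 := lhs.symm
        _ = ∑ x, h x * ∑ i : Fin R, a i (g2 x y (l i)) * b i (g2 x y) := by
            refine Finset.sum_congr rfl fun x _ => ?_
            exact congrArg (fun t => h x * t) (hT (g2 x y))
        _ = _ := rhs
    -- conclude by dimension count
    set W := Submodule.span F ((Aᶜ.image a : Finset (ι → F)) : Set (ι → F)) with hW
    have hWrank : finrank F W ≤ R - A.card := by
      refine le_trans (finrank_span_finset_le_card (R := F) (Aᶜ.image a)) ?_
      refine le_trans (Finset.card_image_le) ?_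
      rw [Finset.card_compl, Fintype.card_fin]
    set Ψ : (ι → F) →ₗ[F] (ι → F) := LinearMap.pi (fun y => c y • LinearMap.proj y) with hΨ
    have hΨapp : ∀ h y, Ψ h y = c y * h y := by intro h y; simp [hΨ]
    have hmapsto : ∀ h ∈ K, Ψ h ∈ W := by
      intro h hh
      have : Ψ h = ∑ i ∈ Aᶜ, (∑ x, h x * b i (fun _ => x)) • a i := by
        funext y
        rw [hΨapp, key h hh y, Finset.sum_apply]
        refine Finset.sum_congr rfl fun i _ => ?_
        simp [mul_comm]
      rw [this]
      refine Submodule.sum_mem _ fun i hi => ?_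
      exact Submodule.smul_mem _ _ (Submodule.subset_span (by
        simp only [Finset.coe_image, Set.mem_image, Finset.mem_coe]
        exact ⟨i, hi, rfl⟩))
    set ΨK : K →ₗ[F] W :=
      LinearMap.codRestrict W (Ψ.comp K.subtype) (fun ⟨h, hh⟩ => hmapsto h hh) with hΨK
    have hinj : Function.Injective ΨK := by
      intro ⟨h, hh⟩ ⟨h', hh'⟩ heq
      have heq2 : ∀ y, c y * h y = c y * h' y := by
        intro y
        have := congrArg (fun w : W => (w : ι → F) y) heq
        simpa [hΨK, hΨapp] using this
      refine Subtype.ext (funext fun y => ?_)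
      show h y = h' y
      by_cases hy : y ∈ S
      · exact mul_left_cancel₀ (hc y hy) (heq2 y)
      · rw [hKsupp h hh y hy, hKsupp h' hh' y hy]
    have hKW : finrank F K ≤ finrank F W := LinearMap.finrank_le_finrank_of_injective hinj
    have hAR : A.card ≤ R := by
      refine le_trans (Finset.card_le_univ A) ?_
      simp
    omega

  case step =>
    rintro k hk IH S c hc R ⟨l, a, b, hb, hT⟩
    classical
    set A := Finset.univ.filter (fun i : Fin R => l i = 0) with hA
    obtain ⟨K, hKmem, hKrank⟩ :=
      finrank_ker_constraints (F := F) S A.card (fun j => a ((A.equivFin.symm j) : Fin R))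
    have hKcon : ∀ h ∈ K, ∀ i ∈ A, ∑ x, h x * a i x = 0 := by
      intro h hh i hi
      have := ((hKmem h).1 hh).2 (A.equivFin ⟨i, hi⟩)
      simpa using this
    have hKsupp : ∀ h ∈ K, ∀ x ∉ S, h x = 0 := fun h hh => ((hKmem h).1 hh).1
    obtain ⟨v, hvK, hvcard⟩ := exists_large_support K
    set S' := Finset.univ.filter (fun x => v x ≠ 0) with hS'
    set c' : ι → F := fun x => v x * c x with hc'def
    have hS'S : S' ⊆ S := by
      intro x hx
      by_contra hxS
      have := hKsupp v hvK x hxS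
      have h2 : v x ≠ 0 := by simpa [hS'] using hx
      exact h2 this
    have hc' : ∀ x ∈ S', c' x ≠ 0 := by
      intro x hx
      have h1 : v x ≠ 0 := by simpa [hS'] using hx
      exact mul_ne_zero h1 (hc x (hS'S hx))
    set R' := Aᶜ.card with hR'
    set e : Fin R' ≃ ↥(Aᶜ) := (Aᶜ).equivFin.symm with he
    have hle : ∀ i' : Fin R', l ((e i' : Fin R)) ≠ 0 := by
      intro i'
      have h2 := (e i').2
      simpa [hA] using h2
    have hSR' : S'.card ≤ R' := by
      apply IH S' c' hc' R'
      refine ⟨fun i' => (l ((e i' : Fin R))).pred (hle i'), fun i' => a ((e i' : Fin R)),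
        fun i' g' => ∑ x, v x * b ((e i' : Fin R)) (Fin.cons x g'), ?_, ?_⟩
      · intro i' g' g'' hgg
        refine Finset.sum_congr rfl fun x _ => ?_
        congr 1
        apply hb
        intro j hj
        rcases Fin.eq_zero_or_eq_succ j with rfl | ⟨j0, rfl⟩
        · simp
        · simp only [Fin.cons_succ]
          apply hgg
          intro hcon
          apply hj
          rw [hcon, Fin.succ_pred]
      · intro g'
        set z : ι := g' ⟨0, by omega⟩ with hz
        show (∑ x ∈ S', if (∀ j, g' j = x) then c' x else 0) = _
        have lhs2 : (∑ x, v x * ∑ s ∈ S, if (∀ j : Fin (k+1), (Fin.cons x g' : Fin (k+1) → ι) j = s) then c s else 0)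
            = ∑ s ∈ S', if (∀ j, g' j = s) then c' s else 0 := by
          have e1 : ∀ x : ι, (∑ s ∈ S, if (∀ j : Fin (k+1), (Fin.cons x g' : Fin (k+1) → ι) j = s) then c s else 0)
              = ∑ s ∈ S, if (x = s ∧ ∀ j, g' j = s) then c s else 0 := by
            intro x
            refine Finset.sum_congr rfl fun s _ => if_congr ?_ rfl rfl
            rw [Fin.forall_fin_succ]
            simp
          simp_rw [e1, Finset.mul_sum]
          rw [Finset.sum_comm]
          have e2 : ∀ s ∈ S, (∑ x, v x * if (x = s ∧ ∀ j, g' j = s) then c s else 0)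
              = if (∀ j, g' j = s) then v s * c s else 0 :=
            fun s _ => sum_ite_eq_helper v s _ (c s)
          rw [Finset.sum_congr rfl e2]
          rw [← Finset.sum_subset hS'S (fun s _ hs' => by
            have hvs : v s = 0 := by
              by_contra hcon
              exact hs' (Finset.mem_filter.2 ⟨Finset.mem_univ s, hcon⟩)
            simp [hvs])]
        have rhs2 : (∑ x, v x * ∑ i : Fin R, a i ((Fin.cons x g' : Fin (k+1) → ι) (l i)) * b i (Fin.cons x g'))
            = ∑ i' : Fin R', a ((e i' : Fin R)) (g' ((l ((e i' : Fin R))).pred (hle i'))) *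
                ∑ x, v x * b ((e i' : Fin R)) (Fin.cons x g') := by
          simp_rw [Finset.mul_sum]
          rw [Finset.sum_comm]
          rw [← Finset.sum_filter_add_sum_filter_not Finset.univ (fun i : Fin R => l i = 0)]
          have hA0 : ∀ i ∈ Finset.univ.filter (fun i : Fin R => l i = 0),
              (∑ x, v x * (a i ((Fin.cons x g' : Fin (k+1) → ι) (l i)) * b i (Fin.cons x g'))) = 0 := by
            intro i hi
            have hli : l i = 0 := by simpa using (Finset.mem_filter.1 hi).2
            have hbc : ∀ x : ι, b i (Fin.cons x g') = b i (Fin.cons z g') := by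
              intro x
              apply hb
              intro j hj
              rcases Fin.eq_zero_or_eq_succ j with rfl | ⟨j0, rfl⟩
              · exact absurd hli.symm hj
              · simp
            have e3 : ∀ x : ι, v x * (a i ((Fin.cons x g' : Fin (k+1) → ι) (l i)) * b i (Fin.cons x g'))
                = (v x * a i x) * b i (Fin.cons z g') := by
              intro x
              rw [hbc x, hli, Fin.cons_zero, mul_assoc]
            rw [Finset.sum_congr rfl (fun x _ => e3 x), ← Finset.sum_mul, hKcon v hvK i hi,
              zero_mul]
          rw [Finset.sum_eq_zero hA0, zero_add]
          rw [show Finset.univ.filter (fun i : Fin R => ¬ l i = 0) = Aᶜ from by ext i; simp [hA]]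
          rw [← Finset.sum_attach Aᶜ
            (fun i => ∑ x, v x * (a i ((Fin.cons x g' : Fin (k+1) → ι) (l i)) * b i (Fin.cons x g')))]
          rw [← Finset.univ_eq_attach]
          rw [← Equiv.sum_comp e (fun j : ↥(Aᶜ) =>
            ∑ x, v x * (a (j : Fin R) ((Fin.cons x g' : Fin (k+1) → ι) (l (j : Fin R))) * b (j : Fin R) (Fin.cons x g')))]
          refine Finset.sum_congr rfl fun i' _ => ?_
          have hcons : ∀ x : ι, (Fin.cons x g' : Fin (k+1) → ι) (l ((e i' : Fin R)))
              = g' ((l ((e i' : Fin R))).pred (hle i')) := by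
            intro x
            have h5 := Fin.cons_succ (α := fun _ : Fin (k+1) => ι) x g' ((l ((e i' : Fin R))).pred (hle i'))
            rwa [Fin.succ_pred] at h5
          refine Finset.sum_congr rfl fun x _ => ?_
          rw [hcons x]
          ring
        calc (∑ x ∈ S', if (∀ j, g' j = x) then c' x else 0)
            = ∑ x, v x * ∑ s ∈ S, if (∀ j : Fin (k+1), (Fin.cons x g' : Fin (k+1) → ι) j = s) then c s else 0 := lhs2.symm
          _ = ∑ x, v x * ∑ i : Fin R, a i ((Fin.cons x g' : Fin (k+1) → ι) (l i)) * b i (Fin.cons x g') := by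
              refine Finset.sum_congr rfl fun x _ => ?_
              exact congrArg (fun t => v x * t) (hT (Fin.cons x g'))
          _ = _ := rhs2
    have hAR : A.card ≤ R := by
      refine le_trans (Finset.card_le_univ A) ?_
      simp
    have hR'eq : R' = R - A.card := by
      rw [hR', Finset.card_compl, Fintype.card_fin]
    omega

/-- **(Tao)** The diagonal `k`-fold tensor `δ : [D]^k → F`, with `δ(j, …, j) = 1` and
all other entries `0`, has slice rank exactly `D`: its slice rank is at most `D` and
not at most any `R < D`. -/
theorem slice_rank_diagonal (F : Type*) [Field F] (D k : ℕ) (hD : 0 < D) (hk : 2 ≤ k) :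
    SliceRankLE k D (fun g : Fin k → Fin D => if ∀ j j', g j = g j' then (1 : F) else 0) ∧
    ∀ R : ℕ, R < D →
      ¬ SliceRankLE k R (fun g : Fin k → Fin D => if ∀ j j', g j = g j' then (1 : F) else 0) := by
  classical
  have hzero : (0 : ℕ) < k := by omega
  constructor
  · refine ⟨fun _ => ⟨0, hzero⟩, fun i x => if x = i then 1 else 0,
      fun i g => if ∀ j : Fin k, j ≠ ⟨0, hzero⟩ → g j = i then 1 else 0, ?_, ?_⟩
    · intro i g g' hgg
      refine if_congr ?_ rfl rfl
      constructor <;> intro h j hj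
      · rw [← hgg j hj]; exact h j hj
      · rw [hgg j hj]; exact h j hj
    · intro g
      show (if ∀ j j', g j = g j' then (1 : F) else 0) = _
      by_cases hcon : ∀ j j', g j = g j'
      · rw [if_pos hcon]
        rw [Finset.sum_eq_single (g ⟨0, hzero⟩)]
        · beta_reduce
          rw [if_pos rfl, if_pos (fun j _ => hcon j ⟨0, hzero⟩), one_mul]
        · intro i _ hne
          beta_reduce
          rw [if_neg (fun hcon2 : g ⟨0, hzero⟩ = i => hne hcon2.symm), zero_mul]
        · intro hmem
          exact absurd (Finset.mem_univ _) hmem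
      · rw [if_neg hcon]
        symm
        apply Finset.sum_eq_zero
        intro i _
        beta_reduce
        by_cases h1 : g ⟨0, hzero⟩ = i
        · by_cases h2 : ∀ j : Fin k, j ≠ ⟨0, hzero⟩ → g j = i
          · exfalso
            apply hcon
            have hval : ∀ j : Fin k, g j = i := by
              intro j
              by_cases hj : j = ⟨0, hzero⟩
              · rw [hj]; exact h1
              · exact h2 j hj
            intro j j'
            rw [hval j, hval j']
          · rw [if_neg h2, mul_zero]
        · rw [if_neg h1, zero_mul]
  · intro R hR hSR
    have heq : (fun g : Fin k → Fin D => if ∀ j j', g j = g j' then (1 : F) else 0)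
        = fun g : Fin k → Fin D =>
            ∑ x ∈ Finset.univ, if (∀ j, g j = x) then (fun _ : Fin D => (1 : F)) x else 0 := by
      funext g
      by_cases hcon : ∀ j j', g j = g j'
      · rw [if_pos hcon]
        symm
        rw [Finset.sum_eq_single (g ⟨0, hzero⟩)]
        · rw [if_pos (fun j => hcon j ⟨0, hzero⟩)]
        · intro x _ hne
          rw [if_neg (fun hx => hne ((hx ⟨0, hzero⟩).symm))]
        · intro hmem
          exact absurd (Finset.mem_univ _) hmem
      · rw [if_neg hcon]
        symm
        apply Finset.sum_eq_zero
        intro x _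
        rw [if_neg]
        intro hx
        exact hcon fun j j' => by rw [hx j, hx j']
    rw [heq] at hSR
    have hcard := diag_slice_lower k hk Finset.univ (fun _ : Fin D => (1 : F))
      (fun x _ => one_ne_zero) R hSR
    simp only [Finset.card_univ, Fintype.card_fin] at hcard
    omega
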